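/- arXiv:2007.10924 — 3 statements merged into one kernel-verified Lean document; each statement's English description precedes it below -/
import Mathlib

section
/- For n ≥ 2 and 1 ≤ r ≤ n+1, the number of nonempty subsets E ⊆ {0,1}^n such that the real linear span of {(1, x) : x ∈ E} ⊆ ℝ^{n+1} has dimension exactly r is at most C(2^n, r)·2^{2^{r−1} − r}, where C(·,·) denotes the binomial coefficient. -/
open scoped BigOperators

noncomputable section

/-- The quantum oracle `O_x`, as a diagonal matrix acting on `ℂ^{(n+1)m}`, whose basis
vectors are indexed by pairs `(i, j)` with `i ∈ {0, 1, …, n}` (encoded as `Option (Fin n)`,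
`none` playing the role of `0`) and `j ∈ {1, …, m}`. -/
def oracleMat (n m : ℕ) (x : Fin n → Bool) :
    Matrix (Option (Fin n) × Fin m) (Option (Fin n) × Fin m) ℂ :=
  Matrix.diagonal fun p =>
    match p.1 with
    | none => 1
    | some i => if x i then -1 else 1

/-- Squared Euclidean norm of a complex vector. -/
def vecNormSq {ι : Type*} [Fintype ι] (v : ι → ℂ) : ℝ :=
  ∑ i, Complex.normSq (v i)

/-- The partial Boolean function `f` with domain (promised set) `D` is computed exactly by a
quantum 1-query algorithm: there are `m ≥ 1`, a unit vector `ψ`, unitaries `U₀, U₁` and an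
orthogonal projection `P` with `‖P U₁ O_x U₀ ψ‖² = f x` for all `x ∈ D`. -/
def ComputedExactly1 {n : ℕ} (D : Set (Fin n → Bool)) (f : (Fin n → Bool) → Bool) : Prop :=
  ∃ m : ℕ, 1 ≤ m ∧
    ∃ ψ : Option (Fin n) × Fin m → ℂ, vecNormSq ψ = 1 ∧
      ∃ U₀ U₁ P : Matrix (Option (Fin n) × Fin m) (Option (Fin n) × Fin m) ℂ,
        U₀ ∈ Matrix.unitaryGroup (Option (Fin n) × Fin m) ℂ ∧
        U₁ ∈ Matrix.unitaryGroup (Option (Fin n) × Fin m) ℂ ∧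
        P.IsHermitian ∧ P * P = P ∧
        ∀ x ∈ D, vecNormSq ((P * U₁ * oracleMat n m x * U₀).mulVec ψ) = if f x then 1 else 0

/-- A multilinear polynomial: degree at most 1 in each variable. -/
def IsMultilinear {n : ℕ} (p : MvPolynomial (Fin n) ℝ) : Prop :=
  ∀ i, p.degreeOf i ≤ 1

/-- `p` represents the partial Boolean function `f` on the promised set `D`. -/
def Represents {n : ℕ} (p : MvPolynomial (Fin n) ℝ)
    (D : Set (Fin n → Bool)) (f : (Fin n → Bool) → Bool) : Prop :=
  ∀ x ∈ D, MvPolynomial.eval (fun i => if x i then (1 : ℝ) else 0) p = if f x then 1 else 0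

/-- `f` (with domain `D`) depends on `k` bits: `k` is the minimum, over all multilinear
polynomials representing `f`, of the number of variables occurring. -/
def DependsOnBits {n : ℕ} (D : Set (Fin n → Bool)) (f : (Fin n → Bool) → Bool) (k : ℕ) : Prop :=
  IsLeast {c | ∃ p : MvPolynomial (Fin n) ℝ,
    IsMultilinear p ∧ Represents p D f ∧ p.vars.card = c} k

/-- The Fourier basis vector `|F(x)⟩₁ = (1, (−1)^{x_1}, …, (−1)^{x_n})`. -/
def fourierVec {n : ℕ} (x : Fin n → Bool) : Option (Fin n) → ℂ :=
  fun o => match o with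
  | none => 1
  | some i => if x i then -1 else 1

/-- The polynomial basis vector `(1, x₁, …, xₙ)`. -/
def polyVec {n : ℕ} (x : Fin n → Bool) : Option (Fin n) → ℝ :=
  fun o => match o with
  | none => 1
  | some i => if x i then 1 else 0

/-- A degree-1 SOS complex representation matrix of `f` and its negation, given by the
rows `α l` (`l < p` for `f`, `p ≤ l < p + q` for the negation of `f`). -/
def SOSRep {n : ℕ} (D : Set (Fin n → Bool)) (f : (Fin n → Bool) → Bool)
    (p q : ℕ) (α : Fin (p + q) → Option (Fin n) → ℂ) : Prop :=
  (∀ x ∈ D, ∑ l : Fin p,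
      Complex.normSq (∑ i, (starRingEnd ℂ) (α (Fin.castAdd q l) i) * fourierVec x i)
      = if f x then 1 else 0) ∧
  (∀ x ∈ D, ∑ l : Fin q,
      Complex.normSq (∑ i, (starRingEnd ℂ) (α (Fin.natAdd p l) i) * fourierVec x i)
      = if f x then 0 else 1) ∧
  (∀ x : Fin n → Bool, ∑ l : Fin (p + q),
      Complex.normSq (∑ i, (starRingEnd ℂ) (α l i) * fourierVec x i) = 1)

/-- `rank(G_f(1,b))`: the dimension of the real span of the vectors `(1, x₁, …, xₙ)`
over all `x ∈ D` with `f x = b`. -/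
def rankG {n : ℕ} (D : Set (Fin n → Bool)) (f : (Fin n → Bool) → Bool) (b : Bool) : ℕ :=
  Module.finrank ℝ (Submodule.span ℝ (polyVec '' {x ∈ D | f x = b}))

end

section StmtThirteenProof
open Module Submodule

lemma polyVec_injective {n : ℕ} : Function.Injective (polyVec (n := n)) := by
  intro x y h
  funext i
  have := congrFun h (some i)
  simp [polyVec] at this
  cases hx : x i <;> cases hy : y i <;> simp [hx, hy] at this ⊢ <;> norm_num at this

lemma lemA {n r : ℕ} (V : Submodule ℝ (Option (Fin n) → ℝ))
    (hV : Module.finrank ℝ V = r) (hne : ∃ x : Fin n → Bool, polyVec x ∈ V) :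
    Set.ncard {x : Fin n → Bool | polyVec x ∈ V} ≤ 2 ^ (r - 1) := by
  classical
  obtain ⟨x₀, hx₀⟩ := hne
  -- coordinate functionals on V
  set ev : Option (Fin n) → Module.Dual ℝ V :=
    fun i => (LinearMap.proj i).comp V.subtype with hev
  have hev_apply : ∀ i (v : V), ev i v = (v : Option (Fin n) → ℝ) i := fun i v => rfl
  -- they span the dual
  have hspan : span ℝ (Set.range ev) = ⊤ := by
    have hsurj : Function.Surjective (V.subtype.dualMap) :=
      LinearMap.dualMap_surjective_iff.mpr V.injective_subtype
    have hb : span ℝ (Set.range ((Pi.basisFun ℝ (Option (Fin n))).dualBasis)) = ⊤ :=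
      Basis.span_eq _
    have hcomp : ev = fun i => V.subtype.dualMap ((Pi.basisFun ℝ (Option (Fin n))).dualBasis i) := by
      funext i
      apply LinearMap.ext
      intro v
      simp [hev_apply, LinearMap.dualMap_apply]
    rw [hcomp, show (fun i => V.subtype.dualMap ((Pi.basisFun ℝ (Option (Fin n))).dualBasis i))
        = ⇑V.subtype.dualMap ∘ ⇑(Pi.basisFun ℝ (Option (Fin n))).dualBasis from rfl,
      Set.range_comp, ← Submodule.map_span, hb, Submodule.map_top,
      LinearMap.range_eq_top.mpr hsurj]
  have hnone : ev none ≠ 0 := by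
    intro h
    have := congrFun (congrArg DFunLike.coe h) ⟨polyVec x₀, hx₀⟩
    simp [hev_apply, polyVec] at this
  -- extend {ev none} to a basis-like set b within range ev
  have hsing : LinearIndependent ℝ ((↑) : ({ev none} : Set (Module.Dual ℝ V)) → Module.Dual ℝ V) :=
    (linearIndepOn_singleton_iff (R := ℝ) (v := (id : Module.Dual ℝ V → Module.Dual ℝ V))).mpr hnone
  have hsub : ({ev none} : Set (Module.Dual ℝ V)) ⊆ Set.range ev :=
    Set.singleton_subset_iff.mpr ⟨none, rfl⟩
  obtain ⟨b, hbt, hsb, htb, hbli⟩ := exists_linearIndepOn_id_extension hsing hsub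
  have hVfd : FiniteDimensional ℝ V := inferInstance
  have hspanb : span ℝ b = ⊤ := by
    rw [eq_top_iff, ← hspan]
    exact span_le.mpr htb
  have hbfin : b.Finite := hbli.finite
  letI : Fintype b := hbfin.fintype
  have hdual : Module.finrank ℝ (Module.Dual ℝ V) = r := by
    rw [Subspace.dual_finrank_eq, hV]
  have hcardb : b.toFinset.card = r := by
    have h := finrank_span_set_eq_card hbli
    rw [hspanb, finrank_top, hdual] at h
    exact h.symm
  have hmemnone : ev none ∈ b := hsb rfl
  have hchoice : ∀ u ∈ b \ ({ev none} : Set (Module.Dual ℝ V)), ∃ jj : Fin n, ev (some jj) = u := by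
    intro u hu
    obtain ⟨i, hi⟩ := hbt hu.1
    cases i with
    | none => exact absurd (hi ▸ rfl) (Ne.symm hu.2)
    | some j => exact ⟨j, hi⟩
  set c : Set (Module.Dual ℝ V) := b \ {ev none} with hc
  have jfun : ∀ u : c, {jj : Fin n // ev (some jj) = (u : Module.Dual ℝ V)} :=
    fun u => ⟨(hchoice u u.2).choose, (hchoice u u.2).choose_spec⟩
  set F : (Fin n → Bool) → (c → Bool) := fun x u => x (jfun u).1 with hF
  have hinj : Set.InjOn F {x : Fin n → Bool | polyVec x ∈ V} := by
    intro x hx y hy hxy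
    set v : V := ⟨polyVec x - polyVec y, sub_mem hx hy⟩ with hv
    have hvanish : ∀ ξ ∈ b, ξ v = 0 := by
      intro ξ hξ
      by_cases hξn : ξ = ev none
      · subst hξn
        show (polyVec x - polyVec y) none = 0
        simp [polyVec]
      · set u : c := ⟨ξ, ⟨hξ, hξn⟩⟩ with hu
        have hj : ev (some (jfun u).1) = ξ := (jfun u).2
        have hval : x (jfun u).1 = y (jfun u).1 := congrFun hxy u
        rw [← hj]
        show (polyVec x - polyVec y) (some (jfun u).1) = 0
        simp [polyVec, hval]
    have hker : span ℝ b ≤ LinearMap.ker (Module.Dual.eval ℝ V v) :=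
      span_le.mpr (fun ξ hξ => hvanish ξ hξ)
    have hall : ∀ ξ : Module.Dual ℝ V, ξ v = 0 := by
      intro ξ
      exact hker (hspanb ▸ mem_top)
    have hv0 : v = 0 := (Module.forall_dual_apply_eq_zero_iff ℝ v).mp hall
    have : polyVec x - polyVec y = 0 := congrArg Subtype.val hv0
    exact polyVec_injective (by rwa [sub_eq_zero] at this)
  letI : Fintype c := (hbfin.diff (t := {ev none})).fintype
  have hccard : Fintype.card c = r - 1 := by
    have h1 : (c : Set _).ncard = b.ncard - 1 := Set.ncard_diff_singleton_of_mem hmemnone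
    have h2 : b.ncard = r := by rw [Set.ncard_eq_toFinset_card' b, hcardb]
    rw [← Nat.card_coe_set_eq, Nat.card_eq_fintype_card] at h1
    rw [h1, h2]
  calc Set.ncard {x : Fin n → Bool | polyVec x ∈ V}
      ≤ (Set.univ : Set (c → Bool)).ncard :=
        Set.ncard_le_ncard_of_injOn F (fun a _ => Set.mem_univ _) hinj Set.finite_univ
    _ = 2 ^ (r - 1) := by
        rw [Set.ncard_univ, Nat.card_eq_fintype_card, Fintype.card_fun, hccard]
        simp

lemma lemB {n r : ℕ} (E : Set (Fin n → Bool))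
    (hE : Module.finrank ℝ (span ℝ (polyVec '' E)) = r) :
    ∃ B : Finset (Fin n → Bool), ↑B ⊆ E ∧ B.card = r ∧
      span ℝ (polyVec '' ↑B) = span ℝ (polyVec '' E) := by
  classical
  obtain ⟨b, hb, hspan, hli⟩ := exists_linearIndependent ℝ (polyVec '' E)
  have hbfin : b.Finite := ((Set.toFinite E).image polyVec).subset hb
  letI : Fintype b := hbfin.fintype
  have hcard : b.toFinset.card = r := by
    have h := finrank_span_set_eq_card hli
    rw [hspan, hE] at h
    exact h.symm
  set A : Set (Fin n → Bool) := E ∩ polyVec ⁻¹' b with hA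
  have himg : polyVec '' A = b := by
    apply Set.Subset.antisymm
    · rintro u ⟨x, ⟨hxE, hxb⟩, rfl⟩; exact hxb
    · intro u hu
      obtain ⟨x, hxE, rfl⟩ := hb hu
      exact ⟨x, ⟨hxE, hu⟩, rfl⟩
  have hAfin : A.Finite := Set.toFinite A
  refine ⟨hAfin.toFinset, ?_, ?_, ?_⟩
  · rw [hAfin.coe_toFinset]; exact Set.inter_subset_left
  · have h1 : (polyVec '' A).ncard = A.ncard :=
      Set.ncard_image_of_injective A polyVec_injective
    rw [himg] at h1
    have h2 : b.ncard = r := by rw [Set.ncard_eq_toFinset_card' b, hcard]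
    rw [Set.ncard_eq_toFinset_card A hAfin] at h1
    rw [h1] at h2
    exact h2
  · rw [hAfin.coe_toFinset, himg, hspan]


theorem stmt_13 (n r : ℕ) (hn : 2 ≤ n) (hr1 : 1 ≤ r) (hr2 : r ≤ n + 1) :
    Set.ncard {E : Set (Fin n → Bool) | E.Nonempty ∧
        Module.finrank ℝ (Submodule.span ℝ (polyVec '' E)) = r}
      ≤ Nat.choose (2 ^ n) r * 2 ^ (2 ^ (r - 1) - r) := by
  classical
  set SB : Finset (Fin n → Bool) → Finset (Fin n → Bool) := fun B =>
    Finset.univ.filter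
      (fun x => polyVec x ∈ span ℝ (polyVec '' (B : Set (Fin n → Bool)))) with hSB
  set 𝒜 : Finset (Finset (Fin n → Bool)) :=
    (Finset.univ.powersetCard r).filter
      (fun B => Module.finrank ℝ (span ℝ (polyVec '' (B : Set (Fin n → Bool)))) = r) with h𝒜
  set 𝒯 : Finset (Finset (Fin n → Bool) × Finset (Fin n → Bool)) :=
    𝒜.biUnion (fun B => {B} ×ˢ (SB B \ B).powerset) with h𝒯
  have hex : ∀ E : Set (Fin n → Bool), ∃ B : Finset (Fin n → Bool),
      Module.finrank ℝ (span ℝ (polyVec '' E)) = r →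
      ((B : Set (Fin n → Bool)) ⊆ E ∧ B.card = r ∧
        span ℝ (polyVec '' (B : Set (Fin n → Bool))) = span ℝ (polyVec '' E)) := by
    intro E
    by_cases h : Module.finrank ℝ (span ℝ (polyVec '' E)) = r
    · obtain ⟨B, h1, h2, h3⟩ := lemB E h
      exact ⟨B, fun _ => ⟨h1, h2, h3⟩⟩
    · exact ⟨∅, fun h' => absurd h' h⟩
  choose Bf hBf using hex
  set φ : Set (Fin n → Bool) → Finset (Fin n → Bool) × Finset (Fin n → Bool) :=
    fun E => (Bf E, (Set.toFinite (E \ ↑(Bf E))).toFinset) with hφ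
  have hmaps : ∀ E ∈ {E : Set (Fin n → Bool) | E.Nonempty ∧
      Module.finrank ℝ (Submodule.span ℝ (polyVec '' E)) = r}, φ E ∈ (𝒯 : Set _) := by
    rintro E ⟨hEne, hEr⟩
    obtain ⟨hB1, hB2, hB3⟩ := hBf E hEr
    rw [Finset.mem_coe, h𝒯, Finset.mem_biUnion]
    refine ⟨Bf E, ?_, ?_⟩
    · rw [h𝒜, Finset.mem_filter, Finset.mem_powersetCard]
      exact ⟨⟨Finset.subset_univ _, hB2⟩, by rw [hB3, hEr]⟩
    · rw [Finset.mem_product, Finset.mem_singleton, Finset.mem_powerset]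
      refine ⟨rfl, ?_⟩
      intro x hx
      rw [Set.Finite.mem_toFinset] at hx
      rw [Finset.mem_sdiff, hSB, Finset.mem_filter]
      refine ⟨⟨Finset.mem_univ _, ?_⟩, ?_⟩
      · rw [hB3]
        exact subset_span (Set.mem_image_of_mem _ hx.1)
      · simpa using hx.2
  have hinj : Set.InjOn φ {E : Set (Fin n → Bool) | E.Nonempty ∧
      Module.finrank ℝ (Submodule.span ℝ (polyVec '' E)) = r} := by
    rintro E1 ⟨hE1ne, hE1r⟩ E2 ⟨hE2ne, hE2r⟩ heq
    have h1 : Bf E1 = Bf E2 := congrArg Prod.fst heq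
    have h2 : E1 \ ↑(Bf E1) = E2 \ ↑(Bf E2) := by
      have := congrArg Prod.snd heq
      simp only [hφ] at this
      have := congrArg (fun t : Finset (Fin n → Bool) => (t : Set (Fin n → Bool))) this
      simpa [Set.Finite.coe_toFinset] using this
    have hs1 : (↑(Bf E1) : Set (Fin n → Bool)) ⊆ E1 := (hBf E1 hE1r).1
    have hs2 : (↑(Bf E2) : Set (Fin n → Bool)) ⊆ E2 := (hBf E2 hE2r).1
    calc E1 = ↑(Bf E1) ∪ (E1 \ ↑(Bf E1)) := (Set.union_diff_cancel hs1).symm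
      _ = ↑(Bf E2) ∪ (E2 \ ↑(Bf E2)) := by rw [h2, h1]
      _ = E2 := Set.union_diff_cancel hs2
  calc Set.ncard {E : Set (Fin n → Bool) | E.Nonempty ∧
        Module.finrank ℝ (Submodule.span ℝ (polyVec '' E)) = r}
      ≤ (𝒯 : Set (Finset (Fin n → Bool) × Finset (Fin n → Bool))).ncard :=
        Set.ncard_le_ncard_of_injOn φ hmaps hinj (𝒯.finite_toSet)
    _ = 𝒯.card := Set.ncard_coe_finset 𝒯
    _ ≤ ∑ B ∈ 𝒜, ({B} ×ˢ (SB B \ B).powerset).card := Finset.card_biUnion_le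
    _ ≤ ∑ _B ∈ 𝒜, 2 ^ (2 ^ (r - 1) - r) := by
        apply Finset.sum_le_sum
        intro B hB
        rw [h𝒜, Finset.mem_filter, Finset.mem_powersetCard] at hB
        obtain ⟨⟨-, hBcard⟩, hBrank⟩ := hB
        have hBsub : B ⊆ SB B := by
          intro x hx
          rw [hSB, Finset.mem_filter]
          exact ⟨Finset.mem_univ _, subset_span (Set.mem_image_of_mem _ hx)⟩
        have hSBcard : (SB B).card ≤ 2 ^ (r - 1) := by
          have hne : ∃ x : Fin n → Bool,
              polyVec x ∈ span ℝ (polyVec '' (B : Set (Fin n → Bool))) := by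
            obtain ⟨x, hx⟩ := Finset.card_pos.mp (by omega : 0 < B.card)
            exact ⟨x, subset_span (Set.mem_image_of_mem _ hx)⟩
          have := lemA _ hBrank hne
          have hset : {x : Fin n → Bool |
              polyVec x ∈ span ℝ (polyVec '' (B : Set (Fin n → Bool)))} = ↑(SB B) := by
            ext x
            simp [hSB]
          rwa [hset, Set.ncard_coe_finset] at this
        calc ({B} ×ˢ (SB B \ B).powerset).card
            = (SB B \ B).powerset.card := by
              rw [Finset.card_product, Finset.card_singleton, one_mul]
          _ = 2 ^ (SB B \ B).card := Finset.card_powerset _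
          _ ≤ 2 ^ (2 ^ (r - 1) - r) := by
              apply Nat.pow_le_pow_right (by norm_num)
              rw [Finset.card_sdiff_of_subset hBsub, hBcard]
              omega
    _ = 𝒜.card * 2 ^ (2 ^ (r - 1) - r) := by rw [Finset.sum_const, smul_eq_mul]
    _ ≤ Nat.choose (2 ^ n) r * 2 ^ (2 ^ (r - 1) - r) := by
        apply Nat.mul_le_mul_right
        calc 𝒜.card ≤ (Finset.univ.powersetCard r :
              Finset (Finset (Fin n → Bool))).card := Finset.card_filter_le _ _
          _ = Nat.choose (2 ^ n) r := by
              rw [Finset.card_powersetCard, Finset.card_univ]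
              congr 1
              simp [Fintype.card_fun]

end StmtThirteenProof
end

section
/- Let f : D → {0,1} be an n-bit partial Boolean function that depends on n bits. Then for every k ∈ {1,…,n} there exist X, X' ∈ D that differ exactly in the k-th coordinate and satisfy f(X) ≠ f(X'). -/
open scoped BigOperators

open MvPolynomial in
lemma aux_degreeOf_one {n : ℕ} (i : Fin n) :
    MvPolynomial.degreeOf i (1 : MvPolynomial (Fin n) ℝ) = 0 := by
  classical
  simp [MvPolynomial.degreeOf_def, MvPolynomial.degrees_one]

open MvPolynomial in
lemma aux_deg_factor {n : ℕ} (i j : Fin n) (c : Bool) :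
    MvPolynomial.degreeOf i
      ((if c then MvPolynomial.X j else 1 - MvPolynomial.X j) : MvPolynomial (Fin n) ℝ)
      ≤ if i = j then 1 else 0 := by
  cases c
  · rw [if_neg Bool.false_ne_true]
    refine le_trans (MvPolynomial.degreeOf_sub_le _ _ _) ?_
    rw [aux_degreeOf_one, MvPolynomial.degreeOf_X]
    simp
  · simp [MvPolynomial.degreeOf_X]

open MvPolynomial in
lemma aux_notMem_vars {n : ℕ} (p : MvPolynomial (Fin n) ℝ) (k : Fin n)
    (h : p.degreeOf k = 0) : k ∉ p.vars := by
  intro hk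
  rw [MvPolynomial.mem_vars] at hk
  obtain ⟨d, hd, hkd⟩ := hk
  have h1 : p.degreeOf k < 1 := by omega
  have h2 := (MvPolynomial.degreeOf_lt_iff (by norm_num : (0:ℕ) < 1)).1 h1 d hd
  rw [Finsupp.mem_support_iff] at hkd
  omega

theorem stmt_16 (n : ℕ) (D : Set (Fin n → Bool)) (f : (Fin n → Bool) → Bool)
    (hdep : DependsOnBits D f n) :
    ∀ k : Fin n, ∃ X ∈ D, Function.update X k (!(X k)) ∈ D ∧
      f X ≠ f (Function.update X k (!(X k))) := by
  intro k
  by_contra hcon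
  push_neg at hcon
  classical
  set v : (Fin n → Bool) → ℝ := fun y =>
    if y ∈ D then (if f y then 1 else 0)
    else if Function.update y k true ∈ D then (if f (Function.update y k true) then 1 else 0)
    else 0 with hv
  set q : MvPolynomial (Fin n) ℝ :=
    ∑ y ∈ Finset.univ.filter (fun y : Fin n → Bool => y k = false),
      MvPolynomial.C (v y) * ∏ i ∈ Finset.univ.erase k,
        (if y i then MvPolynomial.X i else 1 - MvPolynomial.X i) with hq
  -- degree bounds
  have hdeg : ∀ i : Fin n, q.degreeOf i ≤ if i = k then 0 else 1 := by
    intro i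
    refine le_trans (MvPolynomial.degreeOf_sum_le _ _ _) ?_
    apply Finset.sup_le
    intro y hy
    refine le_trans (MvPolynomial.degreeOf_mul_le _ _ _) ?_
    rw [MvPolynomial.degreeOf_C, zero_add]
    refine le_trans (MvPolynomial.degreeOf_prod_le _ _ _) ?_
    refine le_trans (Finset.sum_le_sum (fun j _ => aux_deg_factor i j (y j))) ?_
    rw [Finset.sum_ite_eq]
    by_cases hik : i = k
    · simp [hik]
    · simp [Finset.mem_erase, hik]
  have hml : IsMultilinear q := by
    intro i
    refine le_trans (hdeg i) ?_
    by_cases hik : i = k <;> simp [hik]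
  have hkq : q.degreeOf k = 0 := Nat.le_zero.1 (by simpa using hdeg k)
  -- evaluation
  have hrep : Represents q D f := by
    intro X hX
    set b : Fin n → ℝ := fun i => if X i then 1 else 0 with hb
    have hfac : ∀ (c : Bool) (i : Fin n),
        MvPolynomial.eval b ((if c then MvPolynomial.X i else 1 - MvPolynomial.X i) :
          MvPolynomial (Fin n) ℝ) = if c = X i then 1 else 0 := by
      intro c i
      cases c <;> cases hXi : X i <;> simp [hb, hXi]
    set y₀ : Fin n → Bool := Function.update X k false with hy₀
    have hy₀mem : y₀ ∈ Finset.univ.filter (fun y : Fin n → Bool => y k = false) := by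
      simp [hy₀, Function.update_self]
    have heq : MvPolynomial.eval b q = v y₀ := by
      rw [hq, map_sum]
      rw [Finset.sum_eq_single_of_mem y₀ hy₀mem]
      · rw [map_mul, MvPolynomial.eval_C, map_prod]
        have : ∀ i ∈ Finset.univ.erase k,
            MvPolynomial.eval b ((if y₀ i then MvPolynomial.X i else 1 - MvPolynomial.X i) :
              MvPolynomial (Fin n) ℝ) = 1 := by
          intro i hi
          rw [hfac]
          have : y₀ i = X i := Function.update_of_ne (Finset.mem_erase.1 hi).1 _ _
          simp [this]
        rw [Finset.prod_congr rfl this, Finset.prod_const_one, mul_one]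
      · intro y hy hne
        rw [map_mul, map_prod]
        have hyk : y k = false := by simpa using (Finset.mem_filter.1 hy).2
        have : ∃ j, j ≠ k ∧ y j ≠ X j := by
          by_contra hall
          push_neg at hall
          apply hne
          funext j
          by_cases hjk : j = k
          · subst hjk; rw [hyk, hy₀, Function.update_self]
          · rw [hall j hjk, hy₀, Function.update_of_ne hjk]
        obtain ⟨j, hjk, hjne⟩ := this
        rw [Finset.prod_eq_zero (Finset.mem_erase.2 ⟨hjk, Finset.mem_univ j⟩), mul_zero]
        rw [hfac]
        simp [hjne]
    rw [heq]
    by_cases hXk : X k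
    · have hupd : Function.update y₀ k true = X := by
        funext j
        by_cases hjk : j = k
        · subst hjk; rw [Function.update_self, hXk]
        · rw [Function.update_of_ne hjk, hy₀, Function.update_of_ne hjk]
      by_cases hy₀D : y₀ ∈ D
      · have hfeq : f X = f y₀ := by
          have h2 : Function.update X k (!(X k)) = y₀ := by rw [hXk, hy₀]; simp
          rw [← h2]; exact hcon X hX (h2 ▸ hy₀D)
        simp [hv, hy₀D, hfeq]
      · simp [hv, hy₀D, hupd, hX]
    · have hy₀X : y₀ = X := by
        funext j
        by_cases hjk : j = k
        · subst hjk; rw [hy₀, Function.update_self]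
          simp [Bool.not_eq_true] at hXk
          rw [hXk]
        · rw [hy₀, Function.update_of_ne hjk]
      rw [hy₀X]
      simp [hv, hX]
  -- cardinality contradiction
  have hsub : q.vars ⊆ Finset.univ.erase k := by
    intro i hi
    refine Finset.mem_erase.2 ⟨?_, Finset.mem_univ i⟩
    rintro rfl
    exact aux_notMem_vars q i hkq hi
  have hcard : q.vars.card ≤ n - 1 := by
    refine le_trans (Finset.card_le_card hsub) ?_
    rw [Finset.card_erase_of_mem (Finset.mem_univ k), Finset.card_univ]
    simp
  have hle : n ≤ q.vars.card := hdep.2 ⟨q, hml, hrep, rfl⟩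
  have hn : 0 < n := k.pos
  omega
end

section
/- Let f : D → {0,1} be a non-constant n-bit partial Boolean function. Then f can be computed exactly by a quantum 1-query algorithm if and only if there exist m ≥ 1 and a unit vector φ ∈ ℂ^{(n+1)m} such that ⟨O_x φ, O_y φ⟩ = 0 for every x ∈ D with f(x) = 0 and every y ∈ D with f(y) = 1. -/
open scoped BigOperators

noncomputable section Stmt17Aux

open Matrix

namespace Stmt17

variable {κ : Type*} [Fintype κ] [DecidableEq κ]

lemma inn_self (v : κ → ℂ) : star v ⬝ᵥ v = (vecNormSq v : ℂ) := by
  simp [dotProduct, vecNormSq, Complex.normSq_eq_conj_mul_self]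

lemma vecNormSq_eq_zero {v : κ → ℂ} (h : vecNormSq v = 0) : v = 0 := by
  funext i
  have h0 : ∀ j ∈ Finset.univ, (0:ℝ) ≤ Complex.normSq (v j) := fun j _ => Complex.normSq_nonneg _
  have := (Finset.sum_eq_zero_iff_of_nonneg h0).mp h i (Finset.mem_univ i)
  simpa using Complex.normSq_eq_zero.mp this

lemma dot_lemma (A B : Matrix κ κ ℂ) (u v : κ → ℂ) :
    star (A *ᵥ u) ⬝ᵥ (B *ᵥ v) = star u ⬝ᵥ ((Aᴴ * B) *ᵥ v) := by
  rw [star_mulVec, dotProduct_mulVec, vecMul_vecMul, dotProduct_mulVec]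

lemma dot_herm {P : Matrix κ κ ℂ} (hP : P.IsHermitian) (u v : κ → ℂ) :
    star (P *ᵥ u) ⬝ᵥ v = star u ⬝ᵥ (P *ᵥ v) := by
  rw [star_mulVec, hP.eq, ← dotProduct_mulVec]

lemma oracle_conjT_mul_self (n m : ℕ) (x : Fin n → Bool) :
    (oracleMat n m x)ᴴ * oracleMat n m x = 1 := by
  rw [oracleMat, diagonal_conjTranspose, diagonal_mul_diagonal]
  ext ⟨i, j⟩ q
  by_cases h : ((i, j) : Option (Fin n) × Fin m) = q
  · subst h
    rcases i with _ | i
    · simp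
    · rcases hx : x i <;> simp [hx]
  · simp [Matrix.one_apply_ne h, Matrix.diagonal_apply_ne _ h]

lemma oracle_dot (n m : ℕ) (x : Fin n → Bool) (u v : Option (Fin n) × Fin m → ℂ) :
    star (oracleMat n m x *ᵥ u) ⬝ᵥ (oracleMat n m x *ᵥ v) = star u ⬝ᵥ v := by
  rw [dot_lemma, oracle_conjT_mul_self, one_mulVec]

lemma oracle_norm (n m : ℕ) (x : Fin n → Bool) (φ : Option (Fin n) × Fin m → ℂ) :
    vecNormSq (oracleMat n m x *ᵥ φ) = vecNormSq φ := by
  have := oracle_dot n m x φ φ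
  rw [inn_self, inn_self] at this
  exact_mod_cast this

lemma unitary_dot {U : Matrix κ κ ℂ} (hU : U ∈ Matrix.unitaryGroup κ ℂ) (u v : κ → ℂ) :
    star (U *ᵥ u) ⬝ᵥ (U *ᵥ v) = star u ⬝ᵥ v := by
  rw [dot_lemma, ← Matrix.star_eq_conjTranspose, (Unitary.mem_iff.mp hU).1, one_mulVec]

lemma unitary_normSq {U : Matrix κ κ ℂ} (hU : U ∈ Matrix.unitaryGroup κ ℂ) (v : κ → ℂ) :
    vecNormSq (U *ᵥ v) = vecNormSq v := by
  have := unitary_dot hU v v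
  rw [inn_self, inn_self] at this
  exact_mod_cast this

end Stmt17

end Stmt17Aux

open Matrix Stmt17

theorem stmt_17 (n : ℕ) (D : Set (Fin n → Bool)) (f : (Fin n → Bool) → Bool)
    (hnc : (∃ x ∈ D, f x = false) ∧ (∃ y ∈ D, f y = true)) :
    ComputedExactly1 D f ↔
      ∃ m : ℕ, 1 ≤ m ∧ ∃ φ : Option (Fin n) × Fin m → ℂ, vecNormSq φ = 1 ∧
        ∀ x ∈ D, f x = false → ∀ y ∈ D, f y = true →
          ∑ i, (starRingEnd ℂ) ((oracleMat n m x).mulVec φ i)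
            * (oracleMat n m y).mulVec φ i = 0 := by
  constructor
  · rintro ⟨m, hm, ψ, hψ, U₀, U₁, P, hU₀, hU₁, hPh, hPP, hrun⟩
    refine ⟨m, hm, U₀ *ᵥ ψ, by rw [unitary_normSq hU₀]; exact hψ, ?_⟩
    intro x hx hfx y hy hfy
    set φ := U₀ *ᵥ ψ with hφdef
    set u := oracleMat n m x *ᵥ φ with hu
    set v := oracleMat n m y *ᵥ φ with hv
    set w := U₁ *ᵥ u with hw
    set w' := U₁ *ᵥ v with hw'
    have hchainx : (P * U₁ * oracleMat n m x * U₀) *ᵥ ψ = P *ᵥ w := by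
      simp only [hw, hu, hφdef, mulVec_mulVec, Matrix.mul_assoc]
    have hchainy : (P * U₁ * oracleMat n m y * U₀) *ᵥ ψ = P *ᵥ w' := by
      simp only [hw', hv, hφdef, mulVec_mulVec, Matrix.mul_assoc]
    have hPw : P *ᵥ w = 0 := by
      have h0 := hrun x hx
      rw [hfx] at h0
      rw [hchainx] at h0
      simpa using vecNormSq_eq_zero (by simpa using h0)
    have h1 := hrun y hy
    rw [hfy, hchainy] at h1
    simp only [if_true] at h1
    have hPP' : star (P *ᵥ w') ⬝ᵥ (P *ᵥ w') = star w' ⬝ᵥ (P *ᵥ w') := by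
      rw [dot_herm hPh, mulVec_mulVec, hPP]
    have ha : star w' ⬝ᵥ (P *ᵥ w') = 1 := by
      rw [← hPP', inn_self, h1, Complex.ofReal_one]
    have hw'1 : star w' ⬝ᵥ w' = 1 := by
      rw [inn_self, hw', unitary_normSq hU₁, hv, oracle_norm, hφdef, unitary_normSq hU₀, hψ,
        Complex.ofReal_one]
    have hPw' : P *ᵥ w' = w' := by
      have hd : star (w' - P *ᵥ w') ⬝ᵥ (w' - P *ᵥ w') = 0 := by
        have hcross : star (P *ᵥ w') ⬝ᵥ w' = 1 := by rw [dot_herm hPh, ha]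
        rw [star_sub, sub_dotProduct, dotProduct_sub, dotProduct_sub, hw'1, ha, hcross,
          hPP', ha]
        ring
      rw [inn_self] at hd
      have := vecNormSq_eq_zero (by exact_mod_cast hd)
      exact (sub_eq_zero.mp this).symm
    have key : star u ⬝ᵥ v = 0 := by
      rw [← unitary_dot hU₁ u v, ← hw, ← hw', ← hPw', ← dot_herm hPh, hPw]
      simp
    exact key
  · rintro ⟨m, hm, φ, hφ, horth⟩
    classical
    set eqv := WithLp.equiv 2 ((Option (Fin n) × Fin m) → ℂ) with heqv
    set V : Submodule ℂ (EuclideanSpace ℂ (Option (Fin n) × Fin m)) :=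
      Submodule.span ℂ
        (eqv.symm '' {w | ∃ y ∈ D, f y = true ∧ w = oracleMat n m y *ᵥ φ}) with hV
    set T : EuclideanSpace ℂ (Option (Fin n) × Fin m) →ₗ[ℂ]
        EuclideanSpace ℂ (Option (Fin n) × Fin m) :=
      ((V.subtypeL ∘L V.orthogonalProjectionOnto :
        EuclideanSpace ℂ (Option (Fin n) × Fin m) →L[ℂ]
          EuclideanSpace ℂ (Option (Fin n) × Fin m)) :
        EuclideanSpace ℂ (Option (Fin n) × Fin m) →ₗ[ℂ]
          EuclideanSpace ℂ (Option (Fin n) × Fin m)) with hT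
    set P : Matrix (Option (Fin n) × Fin m) (Option (Fin n) × Fin m) ℂ :=
      Matrix.toEuclideanLin.symm T with hP
    have hPT : Matrix.toEuclideanLin P = T := Matrix.toEuclideanLin.apply_symm_apply T
    have hTapp : ∀ z, T z = (V.orthogonalProjectionOnto z : EuclideanSpace ℂ _) := fun z => rfl
    have hPapp : ∀ w : (Option (Fin n) × Fin m) → ℂ, P *ᵥ w = eqv (T (eqv.symm w)) := by
      intro w
      have h : Matrix.toEuclideanLin P (eqv.symm w) = eqv.symm (P *ᵥ w) :=
        Matrix.toEuclideanLin_apply_piLp_toLp P w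
      rw [hPT] at h
      rw [h]
      exact (eqv.apply_symm_apply _).symm
    refine ⟨m, hm, φ, hφ, 1, 1, P, one_mem _, one_mem _, ?_, ?_, ?_⟩
    · refine Matrix.isHermitian_iff_isSymmetric.mpr ?_
      rw [hPT]
      exact V.starProjection_isSymmetric
    · have hmv : ∀ w, (P * P) *ᵥ w = P *ᵥ w := by
        intro w
        rw [← Matrix.mulVec_mulVec, hPapp, hPapp, eqv.symm_apply_apply]
        congr 1
        rw [hTapp (T _), hTapp, Submodule.orthogonalProjectionOnto_mem_subspace_eq_self]
      apply Matrix.toLin'.injective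
      exact LinearMap.ext fun w => by
        rw [Matrix.toLin'_apply, Matrix.toLin'_apply, hmv w]
    · intro x hx
      rw [Matrix.mul_one, Matrix.mul_one, ← Matrix.mulVec_mulVec, hPapp]
      cases hfx : f x with
      | true =>
        have hmem : eqv.symm (oracleMat n m x *ᵥ φ) ∈ V :=
          Submodule.subset_span ⟨_, ⟨x, hx, hfx, rfl⟩, rfl⟩
        rw [hTapp, ← Submodule.starProjection_apply, Submodule.starProjection_eq_self_iff.mpr hmem, eqv.apply_symm_apply,
          oracle_norm, hφ]
        simp
      | false =>
        have hsub : V ≤ (ℂ ∙ (eqv.symm (oracleMat n m x *ᵥ φ)))ᗮ := by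
          rw [hV, Submodule.span_le]
          rintro _ ⟨w, ⟨y, hy, hfy, rfl⟩, rfl⟩
          rw [SetLike.mem_coe, Submodule.mem_orthogonal_singleton_iff_inner_right,
            heqv, WithLp.equiv_symm_apply, EuclideanSpace.inner_toLp_toLp, dotProduct_comm]
          exact horth x hx hfx y hy hfy
        have hmemo : eqv.symm (oracleMat n m x *ᵥ φ) ∈ Vᗮ := by
          rw [Submodule.mem_orthogonal']
          intro z hz
          exact Submodule.mem_orthogonal_singleton_iff_inner_right.mp (hsub hz)
        rw [hTapp, Submodule.orthogonalProjectionOnto_eq_zero_iff.mpr hmemo]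
        simp [vecNormSq, heqv, WithLp.ofLp_zero]
end
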